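/- Let R be a commutative ring of characteristic p > 0 and n = mp. The Gerstenhaber bracket on HH^*(R[Z/nZ]) ≅ R[x,y,z]/(xⁿ−1,y²) (with |x|=0,|y|=1,|z|=2) satisfies {z^{k₁}x^{l₁}, z^{k₂}x^{l₂}} = 0, {z^{k₁}x^{l₁}, z^{k₂}y x^{l₂}} = −l₁ z^{k₁+k₂} x^{l₁+l₂−1}, and {z^{k₁}y x^{l₁}, z^{k₂}y x^{l₂}} = (l₂−l₁) z^{k₁+k₂} y x^{l₁+l₂−1}. -/
import Mathlib


noncomputable section

/-
STATEMENT 11: Let R be a commutative ring of characteristic p > 0 and n = mp.  The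
Gerstenhaber bracket on HH^*(R[ℤ/nℤ]) ≅ R[x,y,z]/(xⁿ−1, y²) (|x| = 0, |y| = 1,
|z| = 2) satisfies
  {z^{k₁}x^{l₁}, z^{k₂}x^{l₂}} = 0,
  {z^{k₁}x^{l₁}, z^{k₂}y x^{l₂}} = −l₁ z^{k₁+k₂} x^{l₁+l₂−1},
  {z^{k₁}y x^{l₁}, z^{k₂}y x^{l₂}} = (l₂−l₁) z^{k₁+k₂} y x^{l₁+l₂−1}.
The bracket is determined from the BV-operator Δ (with Δ(z^k x^l) = 0 and
Δ(z^k y x^l) = (l−1) z^k x^{l−1}) by {a,b} = −(−1)^{|a|}(Δ(ab) − Δ(a)b − (−1)^{|a|} a Δ(b));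
below the sign (−1)^{|a|} is expanded according to the (even/odd) degrees of the
arguments, and x^{−1} = x^{n−1}.
-/
theorem gerstenhaber_bracket_cyclic_group_ring_char_p
    (R : Type) [CommRing R] (p m n : ℕ) (hp : 0 < p) (hm : 0 < m) [CharP R p]
    (hn : n = m * p)
    (B : Type) [CommRing B] [Algebra R B]
    (x y z : B)
    (hx : x ^ n = 1) (hy : y ^ 2 = 0)
    (Δ : B →ₗ[R] B)
    (hΔeven : ∀ k l : ℕ, Δ (z ^ k * x ^ l) = 0)
    (hΔodd : ∀ k l : ℕ, Δ (z ^ k * y * x ^ l) = ((l : ℤ) - 1) • (z ^ k * x ^ l * x ^ (n - 1)))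
    (k₁ l₁ k₂ l₂ : ℕ) :
    -- {z^{k₁}x^{l₁}, z^{k₂}x^{l₂}} = 0  (both degrees even)
    -(Δ ((z ^ k₁ * x ^ l₁) * (z ^ k₂ * x ^ l₂))
        - Δ (z ^ k₁ * x ^ l₁) * (z ^ k₂ * x ^ l₂)
        - (z ^ k₁ * x ^ l₁) * Δ (z ^ k₂ * x ^ l₂)) = 0 ∧
    -- {z^{k₁}x^{l₁}, z^{k₂}y x^{l₂}} = −l₁ z^{k₁+k₂} x^{l₁+l₂−1}  (first degree even)
    -(Δ ((z ^ k₁ * x ^ l₁) * (z ^ k₂ * y * x ^ l₂))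
        - Δ (z ^ k₁ * x ^ l₁) * (z ^ k₂ * y * x ^ l₂)
        - (z ^ k₁ * x ^ l₁) * Δ (z ^ k₂ * y * x ^ l₂))
      = -((l₁ : ℤ) • (z ^ (k₁ + k₂) * x ^ (l₁ + l₂) * x ^ (n - 1))) ∧
    -- {z^{k₁}y x^{l₁}, z^{k₂}y x^{l₂}} = (l₂−l₁) z^{k₁+k₂} y x^{l₁+l₂−1}  (both odd)
    (Δ ((z ^ k₁ * y * x ^ l₁) * (z ^ k₂ * y * x ^ l₂))
        - Δ (z ^ k₁ * y * x ^ l₁) * (z ^ k₂ * y * x ^ l₂)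
        + (z ^ k₁ * y * x ^ l₁) * Δ (z ^ k₂ * y * x ^ l₂))
      = ((l₂ : ℤ) - (l₁ : ℤ)) • (z ^ (k₁ + k₂) * y * x ^ (l₁ + l₂) * x ^ (n - 1)) := by
  have h1 : (z ^ k₁ * x ^ l₁) * (z ^ k₂ * x ^ l₂) = z ^ (k₁ + k₂) * x ^ (l₁ + l₂) := by
    rw [pow_add, pow_add]; ring
  have h2 : (z ^ k₁ * x ^ l₁) * (z ^ k₂ * y * x ^ l₂) = z ^ (k₁ + k₂) * y * x ^ (l₁ + l₂) := by
    rw [pow_add, pow_add]; ring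
  have h3 : (z ^ k₁ * y * x ^ l₁) * (z ^ k₂ * y * x ^ l₂) = 0 := by
    have h : (z ^ k₁ * y * x ^ l₁) * (z ^ k₂ * y * x ^ l₂)
        = y ^ 2 * (z ^ k₁ * x ^ l₁ * (z ^ k₂ * x ^ l₂)) := by ring
    rw [h, hy, zero_mul]
  refine ⟨?_, ?_, ?_⟩
  · rw [h1, hΔeven, hΔeven, hΔeven]; ring
  · rw [h2, hΔodd, hΔeven, hΔodd]
    simp only [zsmul_eq_mul]
    push_cast
    rw [pow_add z k₁ k₂, pow_add x l₁ l₂]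
    ring
  · rw [h3, map_zero, hΔodd, hΔodd]
    simp only [zsmul_eq_mul]
    push_cast
    rw [pow_add z k₁ k₂, pow_add x l₁ l₂]
    ring

end
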